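/- Let b ∈ ℝ, σ, Γ ∈ ℝ, η > 0, λ > 0, γ > 0 and T ∈ ℝ, and set c := σ² + ηΓ² (assumed c > 0) and ρ := b²/c. Define A(t) := −λ·exp(ρ(t−T)), C(t) := 1, and D(t) := (γρ/4)(t−T)² − (t−T)(γ/2)·log(πγ/(cλ)) + (1/(4λ))·exp(−ρ(t−T)) − 1/(4λ). Then A(T) = −λ, C(T) = 1, D(T) = 0, and for every t ∈ ℝ the functions are differentiable with A′(t) = ρ·A(t), C′(t) = 0, and D′(t) = ρ·C(t)²/(4A(t)) − (γ/2)·log(πγ/(−c·A(t))); in particular −c·A(t) > 0 so the logarithm is well defined. (This is the paper's explicit solution of the ODE system arising from the exploratory HJB equation of the mean-variance problem.) -/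

import Mathlib

open Real

/-- Explicit solution of the ODE system arising from the exploratory HJB equation of the
mean-variance problem: with `c = σ² + ηΓ² > 0`, `ρ = b²/c`,
`A(t) = −λ exp(ρ(t−T))`, `C(t) = 1`, and
`D(t) = (γρ/4)(t−T)² − (t−T)(γ/2) log(πγ/(cλ)) + (1/(4λ)) exp(−ρ(t−T)) − 1/(4λ)`,
we have the terminal conditions and the ODEs `A′ = ρA`, `C′ = 0`,
`D′(t) = ρ C(t)²/(4A(t)) − (γ/2) log(πγ/(−cA(t)))`, with `−cA(t) > 0`. -/
theorem mean_variance_ODE_solution (b σ Γ η lam γ T : ℝ)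
    (hη : 0 < η) (hlam : 0 < lam) (hγ : 0 < γ)
    (c ρ : ℝ) (hcdef : c = σ ^ 2 + η * Γ ^ 2) (hc : 0 < c) (hρ : ρ = b ^ 2 / c)
    (A C D : ℝ → ℝ)
    (hA : ∀ t, A t = -lam * Real.exp (ρ * (t - T)))
    (hC : ∀ t, C t = 1)
    (hD : ∀ t, D t = (γ * ρ / 4) * (t - T) ^ 2
        - (t - T) * (γ / 2) * Real.log (Real.pi * γ / (c * lam))
        + (1 / (4 * lam)) * Real.exp (-ρ * (t - T)) - 1 / (4 * lam)) :
    A T = -lam ∧ C T = 1 ∧ D T = 0 ∧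
      ∀ t : ℝ, 0 < -c * A t ∧
        HasDerivAt A (ρ * A t) t ∧ HasDerivAt C 0 t ∧
        HasDerivAt D (ρ * (C t) ^ 2 / (4 * A t)
          - (γ / 2) * Real.log (Real.pi * γ / (-c * A t))) t := by
  refine ⟨by simp [hA], hC T, by simp [hD], fun t => ?_⟩
  have hexp : (0:ℝ) < Real.exp (ρ * (t - T)) := Real.exp_pos _
  have hAt : A t = -lam * Real.exp (ρ * (t - T)) := hA t
  have hpos : 0 < -c * A t := by
    rw [hAt]; have := mul_pos (mul_pos hc hlam) hexp; nlinarith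
  have ht1 : HasDerivAt (fun s : ℝ => ρ * (s - T)) ρ t := by
    simpa using ((hasDerivAt_id t).sub_const T).const_mul ρ
  have hEA : HasDerivAt (fun s : ℝ => Real.exp (ρ * (s - T)))
      (Real.exp (ρ * (t - T)) * ρ) t := (Real.hasDerivAt_exp _).comp t ht1
  refine ⟨hpos, ?_, ?_, ?_⟩
  · have h2 : HasDerivAt A (-lam * (Real.exp (ρ * (t - T)) * ρ)) t := by
      rw [funext hA]; exact hEA.const_mul (-lam)
    convert h2 using 1
    rw [hAt]; ring
  · rw [funext hC]; simpa using hasDerivAt_const t (1:ℝ)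
  · have ht2 : HasDerivAt (fun s : ℝ => -ρ * (s - T)) (-ρ) t := by
      simpa using ((hasDerivAt_id t).sub_const T).const_mul (-ρ)
    have hEB : HasDerivAt (fun s : ℝ => Real.exp (-ρ * (s - T)))
        (Real.exp (-ρ * (t - T)) * (-ρ)) t := (Real.hasDerivAt_exp _).comp t ht2
    have hsq : HasDerivAt (fun s : ℝ => (s - T) ^ 2) (2 * (t - T)) t := by
      simpa using ((hasDerivAt_id t).sub_const T).fun_pow 2
    have hlin : HasDerivAt (fun s : ℝ => (s - T) * (γ / 2)
        * Real.log (Real.pi * γ / (c * lam)))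
        ((γ / 2) * Real.log (Real.pi * γ / (c * lam))) t := by
      have := (((hasDerivAt_id t).sub_const T).mul_const (γ / 2)).mul_const
        (Real.log (Real.pi * γ / (c * lam)))
      simpa using this
    have hDd : HasDerivAt D
        ((γ * ρ / 4) * (2 * (t - T)) - (γ / 2) * Real.log (Real.pi * γ / (c * lam))
          + (1 / (4 * lam)) * (Real.exp (-ρ * (t - T)) * (-ρ))) t := by
      rw [funext hD]
      exact (((hsq.const_mul (γ * ρ / 4)).sub hlin).add (hEB.const_mul (1 / (4 * lam)))).sub_const _
    convert hDd using 1
    have hlog : Real.log (Real.pi * γ / (-c * A t))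
        = Real.log (Real.pi * γ / (c * lam)) - ρ * (t - T) := by
      have h1 : -c * A t = c * lam * Real.exp (ρ * (t - T)) := by rw [hAt]; ring
      rw [h1, Real.log_div (by positivity) (by positivity),
        Real.log_div (by positivity) (by positivity),
        Real.log_mul (by positivity) (ne_of_gt hexp), Real.log_exp]
      ring
    have hinv : Real.exp (-ρ * (t - T)) = (Real.exp (ρ * (t - T)))⁻¹ := by
      rw [← Real.exp_neg]; ring_nf
    rw [hC t, hlog, hAt, hinv]
    have hne := ne_of_gt hexp
    field_simp
    ring
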